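/- Let Γ¹ and Γ be subgroups of the group of 2×2 real matrices with positive determinant. Let f : ℂ → ℂ satisfy the weight-2 invariance f|₂B = f on ℍ for every B ∈ Γ, and let F be a primitive of f on ℍ. Suppose there is a finite set R ⊆ Γ¹ of coset representatives, i.e. Γ¹ = ⋃_{A ∈ R} (Γ ∩ Γ¹)·A, and a finite set S ⊆ Γ generating Γ as a group. Then the additive subgroup Σ_f of ℂ generated by {F(i) − F(γ·i) : γ ∈ Γ¹} (where i is the imaginary unit) is contained in the additive subgroup of ℂ generated by the finite set {F(i) − F(A·i) : A ∈ R} ∪ {F(i) − F(B·i) : B ∈ S}. In particular, Σ_f is a finitely generated torsion-free abelian group of rank at most |R| + |S|. -/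

import Mathlib

open Matrix MatrixGroups

/-- The Möbius action of a real `2×2` matrix on `ℂ`: `A·z = (az+b)/(cz+d)`. -/
noncomputable def moebius (A : Matrix (Fin 2) (Fin 2) ℝ) (z : ℂ) : ℂ :=
  ((A 0 0 : ℂ) * z + (A 0 1 : ℂ)) / ((A 1 0 : ℂ) * z + (A 1 1 : ℂ))

/-- The weight-2 slash of `f : ℂ → ℂ` by `A`: `(f|₂A)(z) = det(A)·(cz+d)⁻²·f(A·z)`. -/
noncomputable def slashTwo (f : ℂ → ℂ) (A : Matrix (Fin 2) (Fin 2) ℝ) (z : ℂ) : ℂ :=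
  (A.det : ℂ) * ((A 1 0 : ℂ) * z + (A 1 1 : ℂ)) ^ (-2 : ℤ) * f (moebius A z)

/-- The underlying `2×2` real matrix of an element of `GL(2,ℝ)⁺`. -/
def matOf (g : Matrix.GLPos (Fin 2) ℝ) : Matrix (Fin 2) (Fin 2) ℝ :=
  ((g : GL (Fin 2) ℝ) : Matrix (Fin 2) (Fin 2) ℝ)

set_option synthInstance.maxHeartbeats 1000000
set_option maxHeartbeats 1000000

private lemma moebius_coe (g : Matrix.GLPos (Fin 2) ℝ) (z : UpperHalfPlane) :
    moebius (matOf g) (z : ℂ) = ((g • z : UpperHalfPlane) : ℂ) := by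
  rw [show (g • z) = (g : GL (Fin 2) ℝ) • z from rfl,
    UpperHalfPlane.coe_smul_of_det_pos ((Matrix.mem_glpos _).mp g.2)]
  rfl

private lemma moebius_im_pos (g : Matrix.GLPos (Fin 2) ℝ) {z : ℂ} (hz : 0 < z.im) :
    0 < (moebius (matOf g) z).im := by
  have h : moebius (matOf g) z = ((g • UpperHalfPlane.mk z hz : UpperHalfPlane) : ℂ) :=
    moebius_coe g (UpperHalfPlane.mk z hz)
  rw [h]
  exact (g • UpperHalfPlane.mk z hz).2

private lemma denom_ne_zero' (g : Matrix.GLPos (Fin 2) ℝ) {z : ℂ} (hz : 0 < z.im) :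
    ((matOf g 1 0 : ℂ) * z + (matOf g 1 1 : ℂ)) ≠ 0 :=
  UpperHalfPlane.denom_ne_zero g (UpperHalfPlane.mk z hz)

private lemma hasDerivAt_moebius (g : Matrix.GLPos (Fin 2) ℝ) {z : ℂ} (hz : 0 < z.im) :
    HasDerivAt (moebius (matOf g))
      (((matOf g).det : ℂ) / ((matOf g 1 0 : ℂ) * z + (matOf g 1 1 : ℂ)) ^ 2) z := by
  have hden := denom_ne_zero' g hz
  have h1 : HasDerivAt (fun w : ℂ => (matOf g 0 0 : ℂ) * w + (matOf g 0 1 : ℂ))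
      ((matOf g 0 0 : ℂ)) z := by
    simpa using ((hasDerivAt_id z).const_mul ((matOf g 0 0 : ℂ))).add_const (matOf g 0 1 : ℂ)
  have h2 : HasDerivAt (fun w : ℂ => (matOf g 1 0 : ℂ) * w + (matOf g 1 1 : ℂ))
      ((matOf g 1 0 : ℂ)) z := by
    simpa using ((hasDerivAt_id z).const_mul ((matOf g 1 0 : ℂ))).add_const (matOf g 1 1 : ℂ)
  have h := h1.div h2 hden
  refine h.congr_deriv ?_
  rw [Matrix.det_fin_two]
  push_cast
  ring

/-- On `ℍ`, for `B ∈ Γ`, the function `F(B·z) - F(z)` is constant. -/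
private lemma const_diff (Γ : Subgroup (Matrix.GLPos (Fin 2) ℝ)) (f F : ℂ → ℂ)
    (hinv : ∀ B ∈ Γ, ∀ z : ℂ, 0 < z.im → slashTwo f (matOf B) z = f z)
    (hF : ∀ z : ℂ, 0 < z.im → HasDerivAt F (f z) z)
    {B : Matrix.GLPos (Fin 2) ℝ} (hB : B ∈ Γ) {z w : ℂ} (hz : 0 < z.im) (hw : 0 < w.im) :
    F (moebius (matOf B) z) - F z = F (moebius (matOf B) w) - F w := by
  set s : Set ℂ := {u : ℂ | 0 < u.im} with hs
  have hconv : Convex ℝ s := convex_halfSpace_im_gt 0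
  set G : ℂ → ℂ := fun u => F (moebius (matOf B) u) - F u with hG
  have hderiv : ∀ u ∈ s, HasDerivWithinAt G ((fun _ => (0:ℂ)) u) s u := by
    intro u hu
    have hu' : 0 < u.im := hu
    have hcomp : HasDerivAt (fun w => F (moebius (matOf B) w))
        (f (moebius (matOf B) u) *
          (((matOf B).det : ℂ) / ((matOf B 1 0 : ℂ) * u + (matOf B 1 1 : ℂ)) ^ 2)) u :=
      (hF _ (moebius_im_pos B hu')).comp u (hasDerivAt_moebius B hu')
    have htot : HasDerivAt G
        (f (moebius (matOf B) u) *
          (((matOf B).det : ℂ) / ((matOf B 1 0 : ℂ) * u + (matOf B 1 1 : ℂ)) ^ 2) - f u) u :=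
      hcomp.sub (hF u hu')
    have hzero :
        f (moebius (matOf B) u) *
          (((matOf B).det : ℂ) / ((matOf B 1 0 : ℂ) * u + (matOf B 1 1 : ℂ)) ^ 2) - f u = 0 := by
      have hsl := hinv B hB u hu'
      unfold slashTwo at hsl
      have hden := denom_ne_zero' B hu'
      rw [_root_.zpow_neg] at hsl
      rw [sub_eq_zero, ← hsl, zpow_two]
      field_simp
    rw [hzero] at htot
    exact htot.hasDerivWithinAt
  have hbound : ∀ u ∈ s, ‖(fun _ => (0:ℂ)) u‖ ≤ 0 := by intro u _; simp
  have hle := hconv.norm_image_sub_le_of_norm_hasDerivWithin_le hderiv hbound hz hw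
  have h0 : ‖G w - G z‖ ≤ 0 := by simpa using hle
  have heq : G w = G z := by
    rw [← sub_eq_zero]
    exact norm_le_zero_iff.mp h0
  exact heq.symm

private lemma cocycle (Γ : Subgroup (Matrix.GLPos (Fin 2) ℝ)) (f F : ℂ → ℂ)
    (hinv : ∀ B ∈ Γ, ∀ z : ℂ, 0 < z.im → slashTwo f (matOf B) z = f z)
    (hF : ∀ z : ℂ, 0 < z.im → HasDerivAt F (f z) z)
    {B : Matrix.GLPos (Fin 2) ℝ} (hB : B ∈ Γ) (g : Matrix.GLPos (Fin 2) ℝ) :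
    F Complex.I - F (moebius (matOf (B * g)) Complex.I) =
      (F Complex.I - F (moebius (matOf B) Complex.I)) +
      (F Complex.I - F (moebius (matOf g) Complex.I)) := by
  have hI : (0:ℝ) < Complex.I.im := by simp
  set zI : UpperHalfPlane := UpperHalfPlane.mk Complex.I hI with hzI
  have hgI : moebius (matOf g) Complex.I = ((g • zI : UpperHalfPlane) : ℂ) :=
    moebius_coe g zI
  have hmul : moebius (matOf (B * g)) Complex.I
      = moebius (matOf B) (moebius (matOf g) Complex.I) := by
    have h1 : moebius (matOf (B * g)) Complex.I = (((B * g) • zI : UpperHalfPlane) : ℂ) :=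
      moebius_coe (B * g) zI
    rw [h1, mul_smul, ← moebius_coe B (g • zI), hgI]
  have hgpos : 0 < (moebius (matOf g) Complex.I).im := moebius_im_pos g hI
  have hkey := const_diff Γ f F hinv hF hB hgpos hI
  rw [hmul]
  linear_combination -hkey

/-- Let `Γ¹, Γ` be subgroups of the group of `2×2` real matrices with
positive determinant, `f` weight-2 invariant under `Γ` with primitive `F` on `ℍ`, `R ⊆ Γ¹`
a finite set of coset representatives for `(Γ ∩ Γ¹)\Γ¹` and `S ⊆ Γ` a finite generating set
of `Γ`. Then the additive subgroup `Σ_f` of `ℂ` generated by `{F(i) − F(γ·i) : γ ∈ Γ¹}` is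
contained in the additive subgroup generated by the finitely many values at `R ∪ S`; in
particular `Σ_f` is a finitely generated torsion-free abelian group of rank at most
`|R| + |S|`. -/
theorem modular_integral_values_finitely_generated
    (Γ1 Γ : Subgroup (Matrix.GLPos (Fin 2) ℝ)) (f F : ℂ → ℂ)
    (hinv : ∀ B ∈ Γ, ∀ z : ℂ, 0 < z.im → slashTwo f (matOf B) z = f z)
    (hF : ∀ z : ℂ, 0 < z.im → HasDerivAt F (f z) z)
    (R S : Finset (Matrix.GLPos (Fin 2) ℝ))
    (hR : (R : Set (Matrix.GLPos (Fin 2) ℝ)) ⊆ (Γ1 : Set (Matrix.GLPos (Fin 2) ℝ)))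
    (hcoset : ∀ g ∈ Γ1, ∃ A ∈ R, ∃ b, b ∈ Γ ∧ b ∈ Γ1 ∧ g = b * A)
    (hS : (S : Set (Matrix.GLPos (Fin 2) ℝ)) ⊆ (Γ : Set (Matrix.GLPos (Fin 2) ℝ)))
    (hgen : Subgroup.closure (S : Set (Matrix.GLPos (Fin 2) ℝ)) = Γ) :
    AddSubgroup.closure {c : ℂ | ∃ γ ∈ Γ1, c = F Complex.I - F (moebius (matOf γ) Complex.I)} ≤
      AddSubgroup.closure
        ((fun A => F Complex.I - F (moebius (matOf A) Complex.I)) ''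
          ((R : Set (Matrix.GLPos (Fin 2) ℝ)) ∪ (S : Set (Matrix.GLPos (Fin 2) ℝ)))) ∧
    (AddSubgroup.closure
      {c : ℂ | ∃ γ ∈ Γ1, c = F Complex.I - F (moebius (matOf γ) Complex.I)}).FG ∧
    (∀ (n : ℕ) (x : ℂ),
      x ∈ AddSubgroup.closure
        {c : ℂ | ∃ γ ∈ Γ1, c = F Complex.I - F (moebius (matOf γ) Complex.I)} →
      n • x = 0 → n = 0 ∨ x = 0) ∧
    Module.rank ℤ
      (AddSubgroup.closure
        {c : ℂ | ∃ γ ∈ Γ1, c = F Complex.I - F (moebius (matOf γ) Complex.I)}) ≤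
      ((R.card + S.card : ℕ) : Cardinal) := by
  set φ : Matrix.GLPos (Fin 2) ℝ → ℂ :=
    fun g => F Complex.I - F (moebius (matOf g) Complex.I) with hφ
  set bigset : Set ℂ := {c : ℂ | ∃ γ ∈ Γ1, c = φ γ} with hbigset
  set T : Set ℂ := φ '' ((R : Set (Matrix.GLPos (Fin 2) ℝ)) ∪ (S : Set _)) with hT
  set H : AddSubgroup ℂ := AddSubgroup.closure T with hH
  -- φ is a "quasi-morphism": φ (B * g) = φ B + φ g for B ∈ Γ
  have hcoc : ∀ B ∈ Γ, ∀ g, φ (B * g) = φ B + φ g := fun B hB g =>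
    cocycle Γ f F hinv hF hB g
  have hone : φ 1 = 0 := by
    have hI : (0:ℝ) < Complex.I.im := by simp
    have h1 : moebius (matOf (1 : Matrix.GLPos (Fin 2) ℝ)) Complex.I
        = (((1 : Matrix.GLPos (Fin 2) ℝ) • UpperHalfPlane.mk Complex.I hI : UpperHalfPlane) : ℂ) :=
      moebius_coe 1 (UpperHalfPlane.mk Complex.I hI)
    rw [hφ]
    simp only [h1, one_smul]
    simp
  -- every element of Γ maps into H
  have hΓH : ∀ b ∈ Γ, φ b ∈ H := by
    intro b hb
    rw [← hgen] at hb
    induction hb using Subgroup.closure_induction with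
    | mem x hx =>
        exact AddSubgroup.subset_closure ⟨x, Or.inr hx, rfl⟩
    | one => rw [hone]; exact H.zero_mem
    | mul x y hx hy ihx ihy =>
        have hxΓ : x ∈ Γ := by rw [← hgen]; exact hx
        rw [hcoc x hxΓ y]
        exact H.add_mem ihx ihy
    | inv x hx ihx =>
        have hxΓ : x⁻¹ ∈ Γ := by rw [← hgen]; exact inv_mem hx
        have := hcoc x⁻¹ hxΓ x
        rw [inv_mul_cancel, hone] at this
        have : φ x⁻¹ = -φ x := by linear_combination -this
        rw [this]; exact H.neg_mem ihx
  -- main inclusion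
  have hmain : AddSubgroup.closure bigset ≤ H := by
    rw [AddSubgroup.closure_le]
    rintro c ⟨γ, hγ, rfl⟩
    obtain ⟨A, hA, b, hbΓ, _, rfl⟩ := hcoset γ hγ
    rw [hcoc b hbΓ A]
    exact H.add_mem (hΓH b hbΓ)
      (AddSubgroup.subset_closure ⟨A, Or.inl hA, rfl⟩)
  refine ⟨hmain, ?_, ?_, ?_⟩
  · -- finitely generated
    have hTfin : T.Finite := (((R : Set _).toFinite).union ((S : Set _).toFinite)).image φ
    have hfgT : (Submodule.span ℤ T).FG := Submodule.fg_span hTfin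
    have hnoeth : IsNoetherian ℤ (Submodule.span ℤ T) :=
      isNoetherian_of_fg_of_noetherian _ hfgT
    have hle : Submodule.span ℤ bigset ≤ Submodule.span ℤ T := by
      rw [Submodule.span_le]
      intro c hc
      have : c ∈ AddSubgroup.closure bigset := AddSubgroup.subset_closure hc
      have : c ∈ H := hmain this
      rw [hH, ← Submodule.span_int_eq_addSubgroupClosure] at this
      exact this
    have hfg : (Submodule.span ℤ bigset).FG := isNoetherian_submodule.mp hnoeth _ hle
    have := (Submodule.fg_iff_addSubgroup_fg (Submodule.span ℤ bigset)).mp hfg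
    rwa [Submodule.span_int_eq_addSubgroupClosure] at this
  · -- torsion-free
    intro n x _ hnx
    rw [nsmul_eq_mul] at hnx
    rcases mul_eq_zero.mp hnx with h | h
    · left; exact_mod_cast h
    · right; exact h
  · -- rank bound
    have h1 : Module.rank ℤ (AddSubgroup.closure bigset)
        = Module.rank ℤ (Submodule.span ℤ bigset) := by
      rw [← Submodule.span_int_eq_addSubgroupClosure]
      rfl
    have hle : Submodule.span ℤ bigset ≤ Submodule.span ℤ T := by
      rw [Submodule.span_le]
      intro c hc
      have : c ∈ AddSubgroup.closure bigset := AddSubgroup.subset_closure hc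
      have : c ∈ H := hmain this
      rw [hH, ← Submodule.span_int_eq_addSubgroupClosure] at this
      exact this
    calc Module.rank ℤ (AddSubgroup.closure bigset)
        = Module.rank ℤ (Submodule.span ℤ bigset) := h1
      _ ≤ Module.rank ℤ (Submodule.span ℤ T) := Submodule.rank_mono hle
      _ ≤ Cardinal.mk T := rank_span_le T
      _ ≤ ((R ∪ S).card : Cardinal) := by
          rw [hT, ← Finset.coe_union]
          exact (Cardinal.mk_image_le).trans_eq Cardinal.mk_coe_finset
      _ ≤ ((R.card + S.card : ℕ) : Cardinal) :=
          Nat.cast_le.mpr (Finset.card_union_le R S)
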